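/- arXiv:1901.01691 — 3 statements merged into one kernel-verified Lean document; each statement's English description precedes it below -/
import Mathlib

section
/- Let T be an invertible measure-preserving transformation of a probability space (X, B, m), N a positive integer, and F a measurable set of positive measure. With r_F the first return time of T^N to F and F_n = {x ∈ F : r_F(x) = n}, the entropy-type sum −∑_{n≥1} m(F_n) log m(F_n) is finite. -/
open MeasureTheory Set Filter ENNReal NNReal

lemma aux_neg_mul_log_le_two_sqrt {p : ℝ} (hp : 0 ≤ p) :
    -(p * Real.log p) ≤ 2 * Real.sqrt p := by
  rcases eq_or_lt_of_le hp with h | h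
  · simp [← h]
  · have hs : 0 < Real.sqrt p := Real.sqrt_pos.mpr h
    have h1 : Real.log p = 2 * Real.log (Real.sqrt p) := by
      rw [Real.log_sqrt hp]; ring
    have h2 : Real.log (Real.sqrt p)⁻¹ ≤ (Real.sqrt p)⁻¹ - 1 :=
      Real.log_le_sub_one_of_pos (inv_pos.mpr hs)
    rw [Real.log_inv] at h2
    have h3 : -Real.log p ≤ 2 * (Real.sqrt p)⁻¹ := by rw [h1]; linarith
    calc -(p * Real.log p) = p * (-Real.log p) := by ring
      _ ≤ p * (2 * (Real.sqrt p)⁻¹) := mul_le_mul_of_nonneg_left h3 hp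
      _ = 2 * (p / Real.sqrt p) := by ring
      _ = 2 * Real.sqrt p := by rw [Real.div_sqrt]

/-- The entropy-type sum `−∑_{n≥1} m(F_n) log m(F_n)` over the level sets of the first
return time of `T^N` to `F` is finite. -/
theorem stmt1 {X : Type*} [MeasurableSpace X] (m : Measure X) [IsProbabilityMeasure m]
    (T : X ≃ᵐ X) (hT : MeasurePreserving T m m)
    (N : ℕ) (hN : 1 ≤ N) (F : Set X) (hF : MeasurableSet F) (hFpos : 0 < m F)
    (rF : X → ℕ) (hrF : ∀ x, rF x = sInf {n | 1 ≤ n ∧ (⇑T)^[N * n] x ∈ F})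
    (Fn : ℕ → Set X) (hFn : ∀ n, Fn n = {x ∈ F | rF x = n}) :
    Summable (fun n : ℕ => -((m (Fn n)).toReal * Real.log (m (Fn n)).toReal)) := by
  -- measurability of the level sets
  have hA : ∀ k : ℕ, MeasurableSet ((⇑T)^[N*k] ⁻¹' F) := fun k =>
    (T.measurable.iterate (N*k)) hF
  have hFnm : ∀ n, MeasurableSet (Fn n) := by
    intro n
    match n with
    | 0 =>
      have hset : Fn 0 = F ∩ ⋂ (k : ℕ), ⋂ (_ : 1 ≤ k), ((⇑T)^[N*k] ⁻¹' F)ᶜ := by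
        ext x
        simp only [hFn, hrF, Set.mem_setOf_eq, Set.mem_inter_iff, Set.mem_iInter,
          Set.mem_compl_iff, Set.mem_preimage]
        constructor
        · rintro ⟨hxF, h0⟩
          refine ⟨hxF, fun k hk hx => ?_⟩
          have hmem := Nat.sInf_mem (⟨k, hk, hx⟩ :
            {n | 1 ≤ n ∧ (⇑T)^[N*n] x ∈ F}.Nonempty)
          have h1 := hmem.1
          omega
        · rintro ⟨hxF, h⟩
          refine ⟨hxF, ?_⟩
          have hemp : {n | 1 ≤ n ∧ (⇑T)^[N*n] x ∈ F} = ∅ := by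
            ext k
            simp only [Set.mem_setOf_eq, Set.mem_empty_iff_false, iff_false, not_and]
            exact fun hk1 hk2 => h k hk1 hk2
          rw [hemp, Nat.sInf_empty]
      rw [hset]
      exact hF.inter (MeasurableSet.iInter fun k =>
        MeasurableSet.iInter fun _ => (hA k).compl)
    | (n+1) =>
      have hset : Fn (n+1) = (F ∩ (⇑T)^[N*(n+1)] ⁻¹' F) ∩
          ⋂ (k : ℕ), ⋂ (_ : 1 ≤ k ∧ k < n+1), ((⇑T)^[N*k] ⁻¹' F)ᶜ := by
        ext x
        simp only [hFn, hrF, Set.mem_setOf_eq, Set.mem_inter_iff, Set.mem_iInter,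
          Set.mem_compl_iff, Set.mem_preimage]
        constructor
        · rintro ⟨hxF, hs⟩
          have hne : {n | 1 ≤ n ∧ (⇑T)^[N*n] x ∈ F}.Nonempty := by
            by_contra hemp
            rw [Set.not_nonempty_iff_eq_empty] at hemp
            rw [hemp, Nat.sInf_empty] at hs
            omega
          have hmem := Nat.sInf_mem hne
          rw [hs] at hmem
          refine ⟨⟨hxF, hmem.2⟩, fun k hk hx => ?_⟩
          have h := Nat.sInf_le (show k ∈ {n | 1 ≤ n ∧ (⇑T)^[N*n] x ∈ F} from ⟨hk.1, hx⟩)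
          omega
        · rintro ⟨⟨hxF, hmem⟩, hmin⟩
          refine ⟨hxF, le_antisymm (Nat.sInf_le ⟨by omega, hmem⟩) ?_⟩
          by_contra hlt
          push_neg at hlt
          have hin := Nat.sInf_mem (⟨n+1, by omega, hmem⟩ :
            {n' | 1 ≤ n' ∧ (⇑T)^[N*n'] x ∈ F}.Nonempty)
          exact hmin _ ⟨hin.1, hlt⟩ hin.2
      rw [hset]
      exact (hF.inter (hA (n+1))).inter (MeasurableSet.iInter fun k =>
        MeasurableSet.iInter fun _ => (hA k).compl)
  -- the translated sets
  set E : ℕ → ℕ → Set X := fun n j => (⇑T.symm)^[N*j] ⁻¹' (Fn n) with hE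
  have hTsymm : MeasurePreserving (⇑T.symm) m m := MeasurePreserving.symm T hT
  have hEmeas : ∀ n j, MeasurableSet (E n j) := fun n j =>
    (T.symm.measurable.iterate (N*j)) (hFnm n)
  have hEmeasure : ∀ n j, m (E n j) = m (Fn n) := fun n j =>
    (hTsymm.iterate (N*j)).measure_preimage (hFnm n).nullMeasurableSet
  -- inverse iterates
  have hLI : Function.LeftInverse (⇑T.symm) (⇑T) := fun x => T.symm_apply_apply x
  have hRI : Function.LeftInverse (⇑T) (⇑T.symm) := fun x => T.apply_symm_apply x
  have hshift : ∀ (a b : ℕ) (x : X), a ≤ b →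
      (⇑T.symm)^[a] ((⇑T)^[b] x) = (⇑T)^[b-a] x := by
    intro a b x hab
    have hb : (⇑T)^[b] x = (⇑T)^[a] ((⇑T)^[b-a] x) := by
      rw [← Function.iterate_add_apply]
      congr 1
      omega
    rw [hb, hLI.iterate a]
  -- the key disjointness
  have key : ∀ n j n' j', j < n → j' < n' → j ≤ j' → ¬(n = n' ∧ j = j') →
      Disjoint (E n j) (E n' j') := by
    intro n j n' j' hjn hjn' hle hne
    rw [Set.disjoint_left]
    intro y hy hy'
    obtain ⟨d, rfl⟩ := Nat.exists_eq_add_of_le hle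
    have hx : (⇑T.symm)^[N*j] y ∈ Fn n := hy
    have hx' : (⇑T.symm)^[N*(j+d)] y ∈ Fn n' := hy'
    set x' := (⇑T.symm)^[N*(j+d)] y with hx'def
    have hyx' : (⇑T)^[N*(j+d)] x' = y := hRI.iterate (N*(j+d)) y
    have heq : (⇑T.symm)^[N*j] y = (⇑T)^[N*d] x' := by
      rw [← hyx', hshift (N*j) (N*(j+d)) x' (by nlinarith)]
      congr 1
      rw [Nat.mul_add]
      omega
    rw [hFn] at hx hx'
    rcases Nat.eq_zero_or_pos d with hd0 | hdpos
    · subst hd0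
      simp only [Nat.mul_zero, Function.iterate_zero, id_eq] at heq
      rw [heq] at hx
      exact hne ⟨hx.2.symm.trans hx'.2, rfl⟩
    · -- d ≥ 1 : x' returns to F at time d < n', contradiction with rF x' = n'
      have hxF : (⇑T)^[N*d] x' ∈ F := by
        rw [← heq]; exact hx.1
      have hdmem : d ∈ {k | 1 ≤ k ∧ (⇑T)^[N*k] x' ∈ F} := ⟨hdpos, hxF⟩
      have h1 := Nat.sInf_le hdmem
      have h2 : rF x' = n' := hx'.2
      rw [hrF] at h2
      omega
  -- Kac-type bound: ∑ n * m (Fn n) ≤ 1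
  have hkac : ∑' (n : ℕ), (n : ℝ≥0∞) * m (Fn n) ≤ 1 := by
    rw [ENNReal.tsum_eq_iSup_sum]
    refine iSup_le fun s => ?_
    have hsum : ∑ n ∈ s, (n : ℝ≥0∞) * m (Fn n)
        = ∑ p ∈ s.sigma (fun n => Finset.range n), m (E p.1 p.2) := by
      rw [Finset.sum_sigma]
      refine Finset.sum_congr rfl fun n _ => ?_
      rw [Finset.sum_congr rfl fun j _ => hEmeasure n j, Finset.sum_const,
        Finset.card_range, nsmul_eq_mul]
    rw [hsum]
    have hdisj : (↑(s.sigma (fun n => Finset.range n)) :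
        Set ((_ : ℕ) × ℕ)).PairwiseDisjoint (fun p => E p.1 p.2) := by
      intro p hp q hq hpq
      simp only [Finset.coe_sigma, Set.mem_sigma_iff, Finset.mem_coe,
        Finset.mem_range] at hp hq
      have hne : ¬(p.1 = q.1 ∧ p.2 = q.2) := by
        rintro ⟨h1, h2⟩
        exact hpq (Sigma.ext h1 (by simp [h2]))
      rcases le_total p.2 q.2 with h | h
      · exact key p.1 p.2 q.1 q.2 hp.2 hq.2 h hne
      · exact (key q.1 q.2 p.1 p.2 hq.2 hp.2 h (fun ⟨a, b⟩ =>
          hne ⟨a.symm, b.symm⟩)).symm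
    rw [← measure_biUnion_finset hdisj (fun p _ => hEmeas p.1 p.2)]
    exact prob_le_one
  -- pass to real numbers
  set p : ℕ → ℝ := fun n => (m (Fn n)).toReal with hp
  have hp0 : ∀ n, 0 ≤ p n := fun n => ENNReal.toReal_nonneg
  have hp1 : ∀ n, p n ≤ 1 := by
    intro n
    have h := ENNReal.toReal_mono (one_ne_top) (prob_le_one (μ := m) (s := Fn n))
    simpa using h
  have hsum1 : Summable (fun n : ℕ => (n : ℝ) * p n) := by
    have hfin : ∑' (n : ℕ), (n : ℝ≥0∞) * m (Fn n) ≠ ⊤ :=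
      ne_top_of_le_ne_top one_ne_top hkac
    have h := ENNReal.summable_toReal hfin
    simp only [ENNReal.toReal_mul, ENNReal.toReal_natCast] at h
    exact h
  have hgeom : Summable (fun n : ℕ => (2:ℝ) * (1/2)^n) :=
    (summable_geometric_of_lt_one (by norm_num) (by norm_num)).mul_left 2
  have hg : Summable (fun n : ℕ => 2 * (1/2:ℝ)^n + Real.log 4 * ((n:ℝ) * p n)) :=
    hgeom.add (hsum1.mul_left _)
  refine Summable.of_nonneg_of_le (fun n => ?_) (fun n => ?_) hg
  · have hlog : Real.log (p n) ≤ 0 := Real.log_nonpos (hp0 n) (hp1 n)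
    nlinarith [hp0 n]
  · by_cases hc : p n ≤ (1/4:ℝ)^n
    · have h4 : (1/4:ℝ)^n = ((1/2:ℝ)^n)^2 := by
        rw [← pow_mul, mul_comm, pow_mul]
        norm_num
      have hsq : Real.sqrt (p n) ≤ (1/2:ℝ)^n := by
        calc Real.sqrt (p n) ≤ Real.sqrt ((1/4:ℝ)^n) := Real.sqrt_le_sqrt hc
          _ = (1/2:ℝ)^n := by rw [h4, Real.sqrt_sq (by positivity)]
      have hlog4 : (0:ℝ) ≤ Real.log 4 * ((n:ℝ) * p n) :=
        mul_nonneg (Real.log_nonneg (by norm_num)) (mul_nonneg (by positivity) (hp0 n))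
      calc -(p n * Real.log (p n)) ≤ 2 * Real.sqrt (p n) :=
            aux_neg_mul_log_le_two_sqrt (hp0 n)
        _ ≤ 2 * (1/2:ℝ)^n := by linarith
        _ ≤ 2 * (1/2:ℝ)^n + Real.log 4 * ((n:ℝ) * p n) := by linarith
    · push_neg at hc
      have h1 : Real.log ((1/4:ℝ)^n) ≤ Real.log (p n) :=
        Real.log_le_log (by positivity) hc.le
      rw [Real.log_pow] at h1
      have h2 : Real.log (1/4:ℝ) = -Real.log 4 := by
        rw [one_div, Real.log_inv]
      rw [h2] at h1
      have hplog : -Real.log (p n) ≤ (n:ℝ) * Real.log 4 := by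
        push_cast at h1 ⊢
        linarith
      have hpow : (0:ℝ) ≤ 2 * (1/2:ℝ)^n := by positivity
      calc -(p n * Real.log (p n)) = p n * (-Real.log (p n)) := by ring
        _ ≤ p n * ((n:ℝ) * Real.log 4) := mul_le_mul_of_nonneg_left hplog (hp0 n)
        _ = Real.log 4 * ((n:ℝ) * p n) := by ring
        _ ≤ 2 * (1/2:ℝ)^n + Real.log 4 * ((n:ℝ) * p n) := by linarith
end

section
/- Let {S_j(x) = M_j x + a_j}_{j∈Λ} be a finite affine IFS on ℝ^d and m an ergodic shift-invariant probability measure on the two-sided full shift Σ = Λ^ℤ. Assume the average contraction condition λ := lim_{n→∞} (1/n) ∫ log ‖M_{x_0}⋯M_{x_{n−1}}‖ dm(x) < 0. Then for m-almost every x = (x_n)_{n∈ℤ}, the limit π(x) = lim_{n→∞} (a_{x_0} + M_{x_0}a_{x_1} + ⋯ + M_{x_0}⋯M_{x_{n−1}} a_{x_n}) exists in ℝ^d. -/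
set_option linter.unusedSectionVars false
set_option linter.unusedVariables false
set_option maxHeartbeats 1000000


open MeasureTheory Set Filter ENNReal NNReal Topology

/-- The product `M_{x_0} ⋯ M_{x_{n-1}}` of the linear parts of an affine IFS along the
coding `x`. -/
noncomputable def matProd {Λ : Type*} {d : ℕ}
    (M : Λ → (EuclideanSpace ℝ (Fin d) →L[ℝ] EuclideanSpace ℝ (Fin d)))
    (x : ℤ → Λ) (n : ℕ) : EuclideanSpace ℝ (Fin d) →L[ℝ] EuclideanSpace ℝ (Fin d) :=
  ((List.range n).map (fun i => M (x (i : ℤ)))).prod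

section ErgodicTheory

variable {X : Type*} [MeasurableSpace X] (T : X → X) (g : X → ℝ)

/-- `maxBirk T g n x = max (S₁ g x, ..., S_{n+1} g x)`. -/
noncomputable def maxBirk : ℕ → X → ℝ
  | 0, x => birkhoffSum T g 1 x
  | n+1, x => max (maxBirk n x) (birkhoffSum T g (n+2) x)

variable {T g}

lemma birkhoffSum_measurable (hT : Measurable T) (hg : Measurable g) (n : ℕ) :
    Measurable (fun x => birkhoffSum T g n x) := by
  unfold birkhoffSum
  exact Finset.measurable_sum _ (fun i _ => hg.comp (hT.iterate i))

lemma maxBirk_measurable (hT : Measurable T) (hg : Measurable g) (n : ℕ) :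
    Measurable (maxBirk T g n) := by
  induction n with
  | zero => exact birkhoffSum_measurable hT hg 1
  | succ n ih => exact ih.max (birkhoffSum_measurable hT hg (n+2))

lemma maxBirk_mono (x : X) : Monotone (fun n => maxBirk T g n x) := by
  apply monotone_nat_of_le_succ
  intro n; exact le_max_left _ _

lemma birkhoffSum_le_maxBirk {k n : ℕ} (hk : k ≤ n) (x : X) :
    birkhoffSum T g (k+1) x ≤ maxBirk T g n x := by
  induction n with
  | zero => simp only [Nat.le_zero] at hk; subst hk; exact le_refl _
  | succ n ih =>
      rcases Nat.lt_or_ge k (n+1) with h | h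
      · exact le_trans (ih (Nat.lt_succ_iff.mp h)) (le_max_left _ _)
      · have : k = n+1 := le_antisymm hk h
        subst this; exact le_max_right _ _

lemma maxBirk_le {n : ℕ} {x : X} {c : ℝ} (h : ∀ k ≤ n, birkhoffSum T g (k+1) x ≤ c) :
    maxBirk T g n x ≤ c := by
  induction n with
  | zero => exact h 0 le_rfl
  | succ n ih =>
      refine max_le (ih fun k hk => h k (hk.trans (Nat.le_succ n))) (h (n+1) le_rfl)

lemma maxBirk_key (n : ℕ) (x : X) :
    maxBirk T g n x ≤ g x + max (maxBirk T g n (T x)) 0 := by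
  apply maxBirk_le
  intro k hk
  cases k with
  | zero =>
      have : birkhoffSum T g 1 x = g x := birkhoffSum_one T g x
      rw [this]; nlinarith [le_max_right (maxBirk T g n (T x)) (0:ℝ)]
  | succ k =>
      rw [birkhoffSum_succ' T g (k+1) x]
      have h1 : birkhoffSum T g (k+1) (T x) ≤ maxBirk T g n (T x) :=
        birkhoffSum_le_maxBirk (Nat.le_of_succ_le hk) (T x)
      have h2 : maxBirk T g n (T x) ≤ max (maxBirk T g n (T x)) 0 := le_max_left _ _
      linarith

lemma maxBirk_integrable {m : Measure X} (hT : MeasurePreserving T m m)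
    (hg : Measurable g) (hgi : Integrable g m) (n : ℕ) :
    Integrable (maxBirk T g n) m := by
  have hS : ∀ k : ℕ, Integrable (fun x => birkhoffSum T g k x) m := by
    intro k
    unfold birkhoffSum
    apply integrable_finset_sum
    intro i _
    exact ((hT.iterate i).integrable_comp hgi.aestronglyMeasurable).mpr hgi
  induction n with
  | zero => exact hS 1
  | succ n ih =>
      have := ih.sup (hS (n+2))
      simpa [Pi.sup_def, maxBirk] using this

/-- Maximal ergodic theorem. -/
lemma maximal_ergodic {m : Measure X} [IsProbabilityMeasure m]
    (hT : MeasurePreserving T m m) (hg : Measurable g) (hgi : Integrable g m) (n : ℕ) :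
    0 ≤ ∫ x in {y | 0 < maxBirk T g n y}, g x ∂m := by
  classical
  set E : Set X := {y | 0 < maxBirk T g n y} with hE
  have hEmeas : MeasurableSet E := measurableSet_lt measurable_const (maxBirk_measurable hT.measurable hg n)
  set Mn : X → ℝ := fun x => max (maxBirk T g n x) 0 with hMn
  have hMnmeas : Measurable Mn := (maxBirk_measurable hT.measurable hg n).max measurable_const
  have hMni : Integrable Mn m := by
    have := (maxBirk_integrable hT hg hgi n).sup (integrable_const (0:ℝ))
    simpa [Pi.sup_def, hMn] using this
  have hMnTi : Integrable (fun x => Mn (T x)) m :=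
    (hT.integrable_comp hMni.aestronglyMeasurable).mpr hMni
  -- pointwise : on E, g x ≥ Mn x - Mn (T x)
  have key : ∀ x ∈ E, Mn x - Mn (T x) ≤ g x := by
    intro x hx
    have h1 : maxBirk T g n x ≤ g x + Mn (T x) := maxBirk_key n x
    have h2 : Mn x = maxBirk T g n x := max_eq_left (le_of_lt hx)
    linarith
  have step1 : ∫ x in E, (Mn x - Mn (T x)) ∂m ≤ ∫ x in E, g x ∂m := by
    apply setIntegral_mono_on (hMni.sub hMnTi).integrableOn hgi.integrableOn hEmeas key
  have step2 : ∫ x in E, (Mn x - Mn (T x)) ∂m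
      = ∫ x in E, Mn x ∂m - ∫ x in E, Mn (T x) ∂m :=
    integral_sub hMni.integrableOn hMnTi.integrableOn
  have hEint : ∫ x in E, Mn x ∂m = ∫ x, Mn x ∂m := by
    rw [← integral_indicator hEmeas]
    congr 1
    funext x
    by_cases hx : x ∈ E
    · simp [indicator_of_mem hx]
    · have : maxBirk T g n x ≤ 0 := not_lt.mp hx
      simp [indicator_of_notMem hx, hMn, max_eq_right this]
  have hcompT : ∫ x, Mn (T x) ∂m = ∫ x, Mn x ∂m := by
    rw [← MeasureTheory.integral_map hT.measurable.aemeasurable hMnmeas.aestronglyMeasurable, hT.map_eq]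
  have hTle : ∫ x in E, Mn (T x) ∂m ≤ ∫ x, Mn (T x) ∂m := by
    apply setIntegral_le_integral hMnTi
    filter_upwards with x
    exact le_max_right _ _
  have : 0 ≤ ∫ x in E, (Mn x - Mn (T x)) ∂m := by
    rw [step2, hEint]
    have := hTle.trans_eq hcompT
    linarith
  linarith


/-- The a.e. upper-bound half of Birkhoff's ergodic theorem. -/
lemma birkhoff_upper {m : Measure X} [IsProbabilityMeasure m]
    (hT : Ergodic T m) (hg : Measurable g) (hgi : Integrable g m)
    {B : ℝ} (hB : ∀ x, |g x| ≤ B) (hneg : ∫ x, g x ∂m < 0)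
    {q : ℝ} (hq : 0 < q) :
    ∀ᵐ x ∂m, ∀ᶠ n in atTop, birkhoffSum T g n x ≤ q * n := by
  classical
  have hTm : Measurable T := hT.toMeasurePreserving.measurable
  have hne : Nonempty X := by
    by_contra h
    rw [not_nonempty_iff] at h
    have h1 : (m univ) = 1 := measure_univ
    rw [Set.univ_eq_empty_iff.mpr h] at h1
    simp at h1
  have hBpos : 0 ≤ B := (abs_nonneg _).trans (hB (Classical.arbitrary X))
  set A : Set X := {x | ∃ r : ℚ, 0 < (r:ℝ) ∧ ∃ᶠ n in atTop, (r:ℝ) * n < birkhoffSum T g n x}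
    with hA
  have hAmeas : MeasurableSet A := by
    have : A = ⋃ (r : ℚ), ⋃ (_ : 0 < (r:ℝ)), ⋂ (N : ℕ), ⋃ (n : ℕ), ⋃ (_ : N ≤ n),
        {x | (r:ℝ) * n < birkhoffSum T g n x} := by
      ext x
      simp only [hA, mem_setOf_eq, mem_iUnion, mem_iInter, frequently_atTop, mem_setOf_eq, exists_prop, ge_iff_le]
    rw [this]
    refine MeasurableSet.iUnion fun r => MeasurableSet.iUnion fun _ =>
      MeasurableSet.iInter fun N => MeasurableSet.iUnion fun n => MeasurableSet.iUnion fun _ => ?_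
    exact measurableSet_lt measurable_const (birkhoffSum_measurable hTm hg n)
  have hAinv : T ⁻¹' A = A := by
    ext x
    simp only [mem_preimage, hA, mem_setOf_eq]
    constructor
    · rintro ⟨r, hr, hfreq⟩
      refine ⟨r/2, by push_cast; linarith, ?_⟩
      rw [frequently_atTop] at hfreq ⊢
      intro N
      obtain ⟨n, hn, hlt⟩ := hfreq (max N (⌈(B + (r:ℝ)/2) / ((r:ℝ)/2)⌉₊))
      refine ⟨n + 1, le_trans (le_max_left _ _) (hn.trans (Nat.le_succ n)), ?_⟩
      rw [birkhoffSum_succ' T g n x]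
      push_cast [Rat.cast_div]
      have hn2 : ((B + (r:ℝ)/2) / ((r:ℝ)/2)) ≤ (n:ℝ) := by
        refine le_trans (Nat.le_ceil _) ?_
        exact_mod_cast le_trans (le_max_right _ _) hn
      rw [div_le_iff₀ (by positivity : (0:ℝ) < (r:ℝ)/2)] at hn2
      have hgx : -B ≤ g x := neg_le_of_abs_le (hB x)
      nlinarith
    · rintro ⟨r, hr, hfreq⟩
      refine ⟨r/2, by push_cast; linarith, ?_⟩
      rw [frequently_atTop] at hfreq ⊢
      intro N
      obtain ⟨n, hn, hlt⟩ := hfreq (max (N+1) (⌈B / ((r:ℝ)/2)⌉₊ + 1))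
      have hn1 : 1 ≤ n := le_trans (le_trans (Nat.le_add_left 1 N) (le_max_left _ _)) hn
      obtain ⟨k, rfl⟩ : ∃ k, n = k + 1 := ⟨n - 1, (Nat.succ_pred_eq_of_pos hn1).symm⟩
      refine ⟨k, by omega, ?_⟩
      rw [birkhoffSum_succ' T g k x] at hlt
      push_cast [Rat.cast_div] at hlt ⊢
      have hk2 : (B / ((r:ℝ)/2)) ≤ (k:ℝ) := by
        refine le_trans (Nat.le_ceil _) ?_
        have : ⌈B / ((r:ℝ)/2)⌉₊ ≤ k := by omega
        exact_mod_cast this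
      rw [div_le_iff₀ (by positivity : (0:ℝ) < (r:ℝ)/2)] at hk2
      have hgx : g x ≤ B := le_of_abs_le (hB x)
      nlinarith
  rcases hT.toPreErgodic.measure_self_or_compl_eq_zero hAmeas hAinv with hA0 | hAc0
  · -- m A = 0 : done
    have : ∀ᵐ x ∂m, x ∉ A := by
      rw [ae_iff]; simpa using hA0
    filter_upwards [this] with x hx
    obtain ⟨r₀, hr₀, hr₀q⟩ := exists_rat_btwn hq
    have hnotfreq : ¬ ∃ᶠ n in atTop, (r₀:ℝ) * n < birkhoffSum T g n x := by
      intro hf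
      exact hx ⟨r₀, hr₀, hf⟩
    rw [not_frequently] at hnotfreq
    filter_upwards [hnotfreq] with n hn
    have h1 : birkhoffSum T g n x ≤ (r₀:ℝ) * n := not_lt.mp hn
    have h2 : (r₀:ℝ) * n ≤ q * n :=
      mul_le_mul_of_nonneg_right hr₀q.le (Nat.cast_nonneg n)
    linarith
  · -- m Aᶜ = 0 : contradiction with maximal ergodic theorem
    exfalso
    set E : ℕ → Set X := fun n => {y | 0 < maxBirk T g n y} with hE
    have hEmeas : ∀ n, MeasurableSet (E n) :=
      fun n => measurableSet_lt measurable_const (maxBirk_measurable hTm hg n)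
    have hEmono : Monotone E := by
      intro i j hij x hx
      exact lt_of_lt_of_le hx (maxBirk_mono x hij)
    have hsub : A ⊆ ⋃ n, E n := by
      intro x hx
      obtain ⟨r, hr, hfreq⟩ := hx
      rw [frequently_atTop] at hfreq
      obtain ⟨n, hn, hlt⟩ := hfreq 1
      have h0 : (0:ℝ) < birkhoffSum T g n x := by
        have : (0:ℝ) ≤ (r:ℝ) * n := by positivity
        linarith
      obtain ⟨k, rfl⟩ : ∃ k, n = k + 1 := ⟨n - 1, (Nat.succ_pred_eq_of_pos hn).symm⟩
      exact mem_iUnion.mpr ⟨k, lt_of_lt_of_le h0 (birkhoffSum_le_maxBirk le_rfl x)⟩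
    have hUc : m (⋃ n, E n)ᶜ = 0 := by
      refine measure_mono_null ?_ hAc0
      exact compl_subset_compl.mpr hsub
    have hUeq : (⋃ n, E n) =ᵐ[m] (univ : Set X) := by
      rw [ae_eq_univ]; exact hUc
    have hlim : Tendsto (fun n => ∫ x in E n, g x ∂m) atTop (𝓝 (∫ x in ⋃ n, E n, g x ∂m)) :=
      tendsto_setIntegral_of_monotone hEmeas hEmono hgi.integrableOn
    have hge : 0 ≤ ∫ x in ⋃ n, E n, g x ∂m := by
      refine ge_of_tendsto hlim ?_
      filter_upwards with n
      exact maximal_ergodic hT.toMeasurePreserving hg hgi n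
    have : ∫ x in ⋃ n, E n, g x ∂m = ∫ x, g x ∂m := by
      rw [setIntegral_congr_set hUeq, setIntegral_univ]
    linarith [hge.trans_eq this]

end ErgodicTheory

section MatProd
variable {Λ : Type*} {d : ℕ}
  (M : Λ → (EuclideanSpace ℝ (Fin d) →L[ℝ] EuclideanSpace ℝ (Fin d)))

lemma matProd_def' (x : ℤ → Λ) (n : ℕ) :
    matProd M x n = ((List.range n).map (fun i : ℕ => M (x (i : ℤ)))).prod := by
  unfold matProd
  simp only [List.map_flatMap, List.bind_eq_flatMap, List.pure_def] at *
  simp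
  rw [← List.map_eq_flatMap]

lemma matProd_zero (x : ℤ → Λ) : matProd M x 0 = 1 := by
  rw [matProd_def']; simp

lemma matProd_one' (x : ℤ → Λ) : matProd M x 1 = M (x 0) := by
  rw [matProd_def']; simp [List.range_succ]

lemma matProd_add (x : ℤ → Λ) (s t : ℕ) :
    matProd M x (s + t) = matProd M x s * matProd M (fun z => x (z + (s:ℤ))) t := by
  rw [matProd_def', matProd_def', matProd_def']
  rw [List.range_add, List.map_append, List.prod_append]
  congr 1
  rw [List.map_map]
  refine congrArg List.prod (List.map_congr_left ?_)
  intro i hi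
  simp only [Function.comp_apply]
  congr 2
  push_cast
  ring

lemma matProd_congr {x y : ℤ → Λ} {n : ℕ} (h : ∀ i : ℕ, i < n → x (i:ℤ) = y (i:ℤ)) :
    matProd M x n = matProd M y n := by
  rw [matProd_def', matProd_def']
  congr 1
  apply List.map_congr_left
  intro i hi
  rw [h i (List.mem_range.mp hi)]

/-- The key subadditivity estimate along blocks. -/
lemma block_ineq (x : ℤ → Λ) (N : ℕ) (hN : 1 ≤ N) (κ B : ℝ) (hκ : 0 ≤ κ) (hB : 0 ≤ B)
    (hMκ : ∀ j : Λ, Real.log ‖M j‖ ≤ κ)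
    (hφB : ∀ i : ℕ, |Real.log ‖matProd M (fun z => x (z + (i:ℤ))) N‖| ≤ B)
    (hx : ∀ k, matProd M x k ≠ 0)
    {n : ℕ} (hn : 2 * N ≤ n) :
    (N:ℝ) * Real.log ‖matProd M x n‖ ≤
      (∑ i ∈ Finset.range n, Real.log ‖matProd M (fun z => x (z + (i:ℤ))) N‖)
        + (2 * (N:ℝ)^2 * κ + (N:ℝ) * B) := by
  set gl : ℕ → ℝ := fun k => Real.log ‖matProd M x k‖ with hgl
  set φi : ℕ → ℝ := fun i => Real.log ‖matProd M (fun z => x (z + (i:ℤ))) N‖ with hφi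
  have hpos : ∀ k, 0 < ‖matProd M x k‖ := fun k => norm_pos_iff.mpr (hx k)
  have hpos2 : ∀ (s t : ℕ), 0 < ‖matProd M (fun z => x (z + (s:ℤ))) t‖ := by
    intro s t
    have h1 := hpos (s + t)
    rw [matProd_add M x s t] at h1
    have h2 := norm_mul_le (matProd M x s) (matProd M (fun z => x (z + (s:ℤ))) t)
    nlinarith [norm_nonneg (matProd M x s),
      norm_nonneg (matProd M (fun z => x (z + (s:ℤ))) t)]
  have hsub : ∀ (s t : ℕ), gl (s + t) ≤ gl s + Real.log ‖matProd M (fun z => x (z + (s:ℤ))) t‖ := by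
    intro s t
    have h1 : gl (s + t) ≤ Real.log (‖matProd M x s‖ * ‖matProd M (fun z => x (z + (s:ℤ))) t‖) := by
      apply (Real.log_le_log_iff (hpos (s+t)) (mul_pos (hpos s) (hpos2 s t))).mpr
      show ‖matProd M x (s+t)‖ ≤ _
      rw [matProd_add M x s t]
      exact norm_mul_le _ _
    rwa [Real.log_mul (ne_of_gt (hpos s)) (ne_of_gt (hpos2 s t))] at h1
  have hstep : ∀ k, gl (k + 1) ≤ gl k + κ := by
    intro k
    refine le_trans (hsub k 1) ?_
    have h1 : matProd M (fun z => x (z + (k:ℤ))) 1 = M (x ((0:ℤ) + (k:ℤ))) := matProd_one' M _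
    rw [h1]
    have := hMκ (x ((0:ℤ) + (k:ℤ)))
    linarith
  have hlin : ∀ k j, gl (k + j) ≤ gl k + j * κ := by
    intro k j
    induction j with
    | zero => simp
    | succ j ih =>
        have h3 : gl (k + (j+1)) ≤ gl (k+j) + κ := by
          have he : k + (j+1) = (k + j) + 1 := by ring
          rw [he]; exact hstep (k+j)
        push_cast
        push_cast at ih
        linarith
  have hgl0 : gl 0 ≤ 0 := by
    have h1 : matProd M x 0 = 1 := matProd_zero M x
    show Real.log ‖matProd M x 0‖ ≤ 0
    rw [h1]
    refine Real.log_nonpos (norm_nonneg _) ?_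
    rw [ContinuousLinearMap.one_def]
    exact ContinuousLinearMap.norm_id_le
  have hup : ∀ i, i ≤ n → n ≤ i + N → gl n ≤ gl i + (N:ℝ) * κ := by
    intro i h1 h2
    have h3 : gl n = gl (i + (n - i)) := by congr 1; omega
    have h4 := hlin i (n - i)
    have h5 : ((n - i : ℕ):ℝ) ≤ (N:ℝ) := by
      have : n - i ≤ N := by omega
      exact_mod_cast this
    rw [h3]
    nlinarith
  have hlow : ∀ i, i ≤ N → gl i ≤ (N:ℝ) * κ := by
    intro i hi
    have h4 := hlin 0 i
    have h5 : ((i:ℕ):ℝ) ≤ (N:ℝ) := by exact_mod_cast hi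
    simp only [Nat.zero_add] at h4
    nlinarith
  obtain ⟨p, hpN, rfl⟩ : ∃ p, N ≤ p ∧ n = N + p := ⟨n - N, by omega, by omega⟩
  have e1 : ∑ i ∈ Finset.range (N + p), φi i
      = ∑ i ∈ Finset.range (p+1), φi i + ∑ i ∈ Finset.Ico (p+1) (N+p), φi i := by
    rw [Finset.range_eq_Ico, Finset.range_eq_Ico]
    exact (Finset.sum_Ico_consecutive φi (m := 0) (n := p+1) (k := N+p) (by omega) (by omega)).symm
  have e2 : -((N:ℝ) * B) ≤ ∑ i ∈ Finset.Ico (p+1) (N+p), φi i := by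
    have h1 : ((N + p - (p+1) : ℕ)) • (-B) ≤ ∑ i ∈ Finset.Ico (p+1) (N+p), φi i := by
      rw [← Nat.card_Ico (p+1) (N+p)]
      apply Finset.card_nsmul_le_sum
      intro i _
      have h2 := abs_le.mp (hφB i)
      show -B ≤ φi i
      simp only [hφi]
      linarith [h2.1]
    have h2 : ((N + p - (p+1) : ℕ) : ℝ) ≤ (N:ℝ) := by
      have : N + p - (p+1) ≤ N := by omega
      exact_mod_cast this
    rw [nsmul_eq_mul] at h1
    nlinarith
  have e3 : ∑ i ∈ Finset.range (p+1), (gl (i + N) - gl i) ≤ ∑ i ∈ Finset.range (p+1), φi i := by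
    refine Finset.sum_le_sum (fun i _ => ?_)
    have := hsub i N
    simp only [hφi]
    linarith
  have e4 : ∑ i ∈ Finset.range (p+1), (gl (i + N) - gl i)
      = ∑ i ∈ Finset.Ico (p+1) (p+1+N), gl i - ∑ i ∈ Finset.Ico 0 N, gl i := by
    rw [Finset.sum_sub_distrib]
    have h41 : ∑ i ∈ Finset.range (p+1), gl (i + N) = ∑ i ∈ Finset.Ico N (p+1+N), gl i := by
      rw [Finset.sum_Ico_eq_sum_range]
      have he : p+1+N-N = p+1 := by omega
      rw [he]
      exact Finset.sum_congr rfl (fun i _ => by rw [add_comm])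
    have h42 : ∑ i ∈ Finset.Ico N (p+1), gl i + ∑ i ∈ Finset.Ico (p+1) (p+1+N), gl i
        = ∑ i ∈ Finset.Ico N (p+1+N), gl i :=
      Finset.sum_Ico_consecutive _ (by omega) (by omega)
    have h43 : ∑ i ∈ Finset.Ico 0 N, gl i + ∑ i ∈ Finset.Ico N (p+1), gl i
        = ∑ i ∈ Finset.Ico 0 (p+1), gl i :=
      Finset.sum_Ico_consecutive _ (by omega) (by omega)
    have h44 : ∑ i ∈ Finset.range (p+1), gl i = ∑ i ∈ Finset.Ico 0 (p+1), gl i := by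
      rw [Finset.range_eq_Ico]
    rw [h41, h44]
    linarith [h42, h43]
  have e5 : (N:ℝ) * (gl (N+p) - (N:ℝ)*κ) ≤ ∑ i ∈ Finset.Ico (p+1) (p+1+N), gl i := by
    have h1 : ∀ i ∈ Finset.Ico (p+1) (p+1+N), gl (N+p) - (N:ℝ)*κ ≤ gl i := by
      intro i hi
      rw [Finset.mem_Ico] at hi
      have := hup i (by omega) (by omega)
      linarith
    have h2 := Finset.card_nsmul_le_sum _ _ _ h1
    rw [Nat.card_Ico] at h2
    have h3 : p + 1 + N - (p+1) = N := by omega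
    rw [h3, nsmul_eq_mul] at h2
    exact h2
  have e6 : ∑ i ∈ Finset.Ico 0 N, gl i ≤ (N:ℝ) * ((N:ℝ) * κ) := by
    have h1 : ∀ i ∈ Finset.Ico 0 N, gl i ≤ (N:ℝ)*κ := by
      intro i hi
      rw [Finset.mem_Ico] at hi
      exact hlow i (le_of_lt hi.2)
    have h2 := Finset.sum_le_card_nsmul _ _ _ h1
    rw [Nat.card_Ico, nsmul_eq_mul] at h2
    simpa using h2
  have hNN : 2 * (N:ℝ)^2 * κ = (N:ℝ) * ((N:ℝ)*κ) + (N:ℝ) * ((N:ℝ)*κ) := by ring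
  rw [hNN]
  nlinarith [e1, e2, e3, e4, e5, e6]

end MatProd

lemma log_matProd_bdd {Λ : Type*} [Fintype Λ] {d : ℕ}
    (M : Λ → (EuclideanSpace ℝ (Fin d) →L[ℝ] EuclideanSpace ℝ (Fin d)))
    (N : ℕ) (hN : 1 ≤ N) :
    ∃ B₀ : ℝ, ∀ x : ℤ → Λ, |Real.log ‖matProd M x N‖| ≤ B₀ := by
  classical
  obtain ⟨B₀, hB₀⟩ : ∃ B₀ : ℝ, ∀ w : Fin N → Λ,
      |Real.log ‖matProd M (fun z : ℤ => w ⟨z.toNat % N, Nat.mod_lt _ (by omega)⟩) N‖| ≤ B₀ := by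
    obtain ⟨B₀, hB₀⟩ := (Set.finite_range (fun w : Fin N → Λ =>
      |Real.log ‖matProd M (fun z : ℤ => w ⟨z.toNat % N, Nat.mod_lt _ (by omega)⟩) N‖|)).bddAbove
    exact ⟨B₀, fun w => hB₀ ⟨w, rfl⟩⟩
  refine ⟨B₀, fun x => ?_⟩
  have hm : matProd M x N
      = matProd M (fun z : ℤ => (fun i : Fin N => x (i:ℤ)) ⟨z.toNat % N, Nat.mod_lt _ (by omega)⟩) N := by
    apply matProd_congr M
    intro i hi
    simp only
    congr 1
    simp [Nat.mod_eq_of_lt hi]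
  rw [show |Real.log ‖matProd M x N‖|
      = |Real.log ‖matProd M (fun z : ℤ => (fun i : Fin N => x (i:ℤ)) ⟨z.toNat % N, Nat.mod_lt _ (by omega)⟩) N‖|
    from congrArg (fun t => |Real.log ‖t‖|) hm]
  exact hB₀ (fun i : Fin N => x (i:ℤ))


/-- For an affine IFS which is average contracting with respect to an ergodic
shift-invariant measure `m`, the coding map limit
`π(x) = lim_n (a_{x_0} + M_{x_0}a_{x_1} + ⋯ + M_{x_0}⋯M_{x_{n−1}} a_{x_n})`
exists for `m`-a.e. `x`. -/
theorem stmt5 {Λ : Type*} [Fintype Λ] [MeasurableSpace Λ] {d : ℕ}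
    (M : Λ → (EuclideanSpace ℝ (Fin d) →L[ℝ] EuclideanSpace ℝ (Fin d)))
    (a : Λ → EuclideanSpace ℝ (Fin d))
    (m : Measure (ℤ → Λ)) [IsProbabilityMeasure m]
    (herg : Ergodic (fun x (n : ℤ) => x (n + 1)) m)
    (lam : EReal) (hlam_neg : lam < 0)
    (hlam : Tendsto
      (fun n : ℕ => (((∫ x, Real.log ‖matProd M x n‖ ∂m) / n : ℝ) : EReal))
      atTop (𝓝 lam)) :
    ∀ᵐ x ∂m, ∃ y : EuclideanSpace ℝ (Fin d),
      Tendsto (fun n : ℕ => ∑ k ∈ Finset.range (n + 1), matProd M x k (a (x (k : ℤ))))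
        atTop (𝓝 y) := by
  classical
  set T : (ℤ → Λ) → (ℤ → Λ) := fun x n => x (n + 1) with hTdef
  have hTit : ∀ (i : ℕ) (x : ℤ → Λ) (z : ℤ), (T^[i] x) z = x (z + (i:ℤ)) := by
    intro i
    induction i with
    | zero => intro x z; simp
    | succ i ih =>
        intro x z
        rw [Function.iterate_succ_apply]
        calc (T^[i] (T x)) z = (T x) (z + (i:ℤ)) := ih (T x) z
          _ = x (z + (i:ℤ) + 1) := rfl
          _ = x (z + ((i+1:ℕ):ℤ)) := by congr 1; push_cast; ring
  have hTshift : ∀ (i : ℕ) (x : ℤ → Λ), T^[i] x = fun z => x (z + (i:ℤ)) :=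
    fun i x => funext (hTit i x)
  -- constants for the matrices and translations
  obtain ⟨K, hK⟩ : ∃ K, ∀ j : Λ, ‖M j‖ ≤ K := by
    obtain ⟨K, hK⟩ := (Set.finite_range (fun j : Λ => ‖M j‖)).bddAbove
    exact ⟨K, fun j => hK ⟨j, rfl⟩⟩
  set κ : ℝ := Real.log (max K 1) with hκdef
  have hκ0 : 0 ≤ κ := Real.log_nonneg (le_max_right _ _)
  have hMκ : ∀ j : Λ, Real.log ‖M j‖ ≤ κ := by
    intro j
    rcases eq_or_lt_of_le (norm_nonneg (M j)) with h | h
    · rw [← h]; simpa using hκ0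
    · exact (Real.log_le_log_iff h (lt_of_lt_of_le one_pos (le_max_right K 1))).mpr
        (le_trans (hK j) (le_max_left _ _))
  obtain ⟨Ca, hCa⟩ : ∃ C, ∀ j : Λ, ‖a j‖ ≤ C := by
    obtain ⟨C, hC⟩ := (Set.finite_range (fun j : Λ => ‖a j‖)).bddAbove
    exact ⟨C, fun j => hC ⟨j, rfl⟩⟩
  set Ca' : ℝ := max Ca 0 with hCa'def
  have hCa' : ∀ j : Λ, ‖a j‖ ≤ Ca' := fun j => le_trans (hCa j) (le_max_left _ _)
  have hCa'0 : 0 ≤ Ca' := le_max_right _ _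
  -- Step 1: find N with negative integral
  obtain ⟨c, hlc, hc0R⟩ : ∃ c:ℝ, lam < (c:EReal) ∧ c < 0 := by
    obtain ⟨c, h1, h2⟩ := EReal.lt_iff_exists_real_btwn.mp hlam_neg
    exact ⟨c, h1, by exact_mod_cast h2⟩
  have hev := hlam.eventually_lt_const hlc
  obtain ⟨N, hN1, hNlt⟩ : ∃ N:ℕ, 1 ≤ N ∧ ((∫ x, Real.log ‖matProd M x N‖ ∂m) / (N:ℝ)) < c := by
    obtain ⟨N, h1, h2⟩ := ((eventually_ge_atTop 1).and hev).exists
    exact ⟨N, h1, by exact_mod_cast h2⟩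
  have hNR : (0:ℝ) < (N:ℝ) := by exact_mod_cast hN1
  have hI : ∫ x, Real.log ‖matProd M x N‖ ∂m < c * N := (div_lt_iff₀ hNR).mp hNlt
  have hcN : c * (N:ℝ) < 0 := mul_neg_of_neg_of_pos hc0R hNR
  set φf : (ℤ → Λ) → ℝ := fun x => Real.log ‖matProd M x N‖ with hφf
  have hφint : Integrable φf m := by
    by_contra h
    rw [hφf, integral_undef h] at hI
    linarith
  -- uniform bound on |φf|
  obtain ⟨B₀, hB₀⟩ : ∃ B₀, ∀ x : ℤ → Λ, |φf x| ≤ B₀ := log_matProd_bdd M N hN1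
  set B : ℝ := max B₀ 0 with hBdef
  have hB0 : 0 ≤ B := le_max_right _ _
  have hφB : ∀ x, |φf x| ≤ B := fun x => le_trans (hB₀ x) (le_max_left _ _)
  -- measurable truncated version of φf
  have hφaesm := hφint.aestronglyMeasurable
  set f0 : (ℤ → Λ) → ℝ := hφaesm.mk φf with hf0def
  have hf0m : Measurable f0 := hφaesm.stronglyMeasurable_mk.measurable
  have heq : φf =ᵐ[m] f0 := hφaesm.ae_eq_mk
  set f : (ℤ → Λ) → ℝ := fun x => max (-B) (min B (f0 x)) with hff
  have hfm : Measurable f := Measurable.max measurable_const (Measurable.min measurable_const hf0m)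
  have hfB : ∀ x, |f x| ≤ B := by
    intro x
    rw [abs_le]
    exact ⟨le_max_left _ _, max_le (by linarith) (min_le_left _ _)⟩
  have hfeq : f =ᵐ[m] φf := by
    filter_upwards [heq] with x hx
    have h1 := abs_le.mp (hφB x)
    rw [hff]
    simp only
    rw [← hx, min_eq_right h1.2, max_eq_right h1.1]
  have hfint : Integrable f m := hφint.congr (hfeq.symm)
  have hfI : ∫ x, f x ∂m = ∫ x, φf x ∂m := integral_congr_ae hfeq
  -- apply the ergodic theorem to f - c·N
  have hgneg : ∫ x, (f x - c * N) ∂m < 0 := by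
    rw [integral_sub hfint (integrable_const _), integral_const]
    simp only [probReal_univ, one_smul]
    linarith
  have hq0 : 0 < -(c * (N:ℝ)) / 2 := by linarith
  have hbk := birkhoff_upper herg (hfm.sub measurable_const)
      (hfint.sub (integrable_const _)) (B := B + |c * (N:ℝ)|)
      (fun x => by
        show |f x - c * (N:ℝ)| ≤ B + |c * (N:ℝ)|
        rw [sub_eq_add_neg]
        refine le_trans (abs_add_le _ _) ?_
        rw [abs_neg]
        linarith [hfB x]) hgneg hq0
  -- convert to a statement about φf
  have htrans : ∀ᵐ x ∂m, ∀ i : ℕ, f (T^[i] x) = φf (T^[i] x) := by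
    rw [ae_all_iff]
    intro i
    rw [ae_iff]
    exact (herg.toMeasurePreserving.iterate i).quasiMeasurePreserving.preimage_null
      (ae_iff.mp hfeq)
  have hae : ∀ᵐ x ∂m, ∀ᶠ n in atTop,
      (∑ i ∈ Finset.range n, φf (T^[i] x)) ≤ (c * N / 2) * n := by
    filter_upwards [hbk, htrans] with x h1 h2
    filter_upwards [h1] with n hn
    unfold birkhoffSum at hn
    simp only [Pi.sub_apply] at hn
    rw [Finset.sum_sub_distrib, Finset.sum_const, Finset.card_range, nsmul_eq_mul] at hn
    have h3 : ∑ i ∈ Finset.range n, φf (T^[i] x) = ∑ i ∈ Finset.range n, f (T^[i] x) :=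
      Finset.sum_congr rfl (fun i _ => (h2 i).symm)
    rw [h3]
    linarith
  -- pointwise conclusion
  filter_upwards [hae] with x hx
  have hgoal : Summable (fun k : ℕ => matProd M x k (a (x (k:ℤ)))) := by
    by_cases hz : ∀ k, matProd M x k ≠ 0
    · -- no vanishing products: exponential decay
      have hblock : ∀ n : ℕ, 2*N ≤ n →
          (N:ℝ) * Real.log ‖matProd M x n‖ ≤
            (∑ i ∈ Finset.range n, φf (T^[i] x)) + (2 * (N:ℝ)^2 * κ + (N:ℝ) * B) := by
        intro n hn
        have hb := block_ineq M x N hN1 κ B hκ0 hB0 hMκ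
          (fun i => hφB (fun z => x (z + (i:ℤ)))) hz hn
        have hs : ∑ i ∈ Finset.range n, Real.log ‖matProd M (fun z => x (z + (i:ℤ))) N‖
            = ∑ i ∈ Finset.range n, φf (T^[i] x) := by
          refine Finset.sum_congr rfl (fun i _ => ?_)
          rw [hφf]
          simp only
          rw [hTshift i x]
        rwa [hs] at hb
      set D : ℝ := 2 * (N:ℝ)^2 * κ + (N:ℝ) * B with hDdef
      have hD0 : 0 ≤ D := by
        have : (0:ℝ) ≤ 2 * (N:ℝ)^2 * κ := by positivity
        have : (0:ℝ) ≤ (N:ℝ) * B := by positivity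
        rw [hDdef]; positivity
      have hev2 : ∀ᶠ n : ℕ in atTop, Real.log ‖matProd M x n‖ ≤ (c/4) * n := by
        have h4 : ∀ᶠ (n:ℕ) in atTop, (4*D/((N:ℝ) * (-c))) ≤ (n:ℝ) :=
          tendsto_natCast_atTop_atTop.eventually_ge_atTop _
        filter_upwards [hx, h4, eventually_ge_atTop (2*N)] with n h1 h2 h3
        have hb := hblock n h3
        have hNc : 0 < (N:ℝ) * (-c) := by nlinarith
        rw [div_le_iff₀ hNc] at h2
        have k1 : (N:ℝ) * Real.log ‖matProd M x n‖ ≤ (c*N/2)*n + D := by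
          calc (N:ℝ) * Real.log ‖matProd M x n‖
              ≤ (∑ i ∈ Finset.range n, φf (T^[i] x)) + D := hb
            _ ≤ (c * N / 2) * n + D := by linarith
        have k2 : (c*N/2)*(n:ℝ) + D ≤ (N:ℝ)*((c/4)*n) := by nlinarith
        have k3 := le_trans k1 k2
        exact le_of_mul_le_mul_left k3 hNR
      have hr1 : Real.exp (c/4) < 1 := Real.exp_lt_one_iff.mpr (by linarith)
      apply Summable.of_norm_bounded_eventually (g := fun k => Ca' * Real.exp (c/4) ^ k)
      · exact (summable_geometric_of_lt_one (Real.exp_nonneg _) hr1).mul_left _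
      · rw [Nat.cofinite_eq_atTop]
        filter_upwards [hev2] with k hk
        have h1 : ‖matProd M x k (a (x (k:ℤ)))‖ ≤ ‖matProd M x k‖ * ‖a (x (k:ℤ))‖ :=
          ContinuousLinearMap.le_opNorm _ _
        have h2 : ‖matProd M x k‖ ≤ Real.exp (c/4) ^ k := by
          calc ‖matProd M x k‖ = Real.exp (Real.log ‖matProd M x k‖) :=
                (Real.exp_log (norm_pos_iff.mpr (hz k))).symm
            _ ≤ Real.exp ((c/4)*k) := Real.exp_le_exp.mpr hk
            _ = Real.exp (c/4) ^ k := by rw [mul_comm, Real.exp_nat_mul]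
        calc ‖matProd M x k (a (x (k:ℤ)))‖ ≤ ‖matProd M x k‖ * ‖a (x (k:ℤ))‖ := h1
          _ ≤ Real.exp (c/4) ^ k * Ca' :=
              mul_le_mul h2 (hCa' _) (norm_nonneg _) (by positivity)
          _ = Ca' * Real.exp (c/4) ^ k := mul_comm _ _
    · -- some product vanishes: terms are eventually zero
      push_neg at hz
      obtain ⟨k₀, hk₀⟩ := hz
      refine summable_of_ne_finset_zero (s := Finset.range k₀) (fun b hb => ?_)
      have hb' : k₀ ≤ b := by simpa [Finset.mem_range, not_lt] using hb
      have hzero : matProd M x b = 0 := by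
        obtain ⟨t, rfl⟩ : ∃ t, b = k₀ + t := ⟨b - k₀, by omega⟩
        rw [matProd_add M x k₀ t, hk₀, zero_mul]
      rw [hzero]
      simp
  obtain ⟨y, hy⟩ := hgoal
  exact ⟨y, (hy.tendsto_sum_nat).comp (tendsto_add_atTop_nat 1)⟩
end

section
/- Let π : X → Y be a measurable map from a probability space (X, B, m₁) to a complete separable metric space Y in which the Besicovitch covering lemma holds (e.g. Y = ℝ^d), and let ξ = {π^{-1}(y) : y ∈ Y} be the induced measurable partition. If m₂ is another probability measure on (X, B) strongly equivalent to m₁ (i.e. there is C > 0 with C^{-1}m₁(A) ≤ m₂(A) ≤ C m₁(A) for all A ∈ B), then for m₁-almost every x, the conditional measures (m₁)ₓ^ξ and (m₂)ₓ^ξ are strongly equivalent (with constant C²). -/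
open MeasureTheory Set Filter ENNReal NNReal Topology

lemma fiber_int' {X Y : Type*} [mX : MeasurableSpace X] [MeasurableSpace Y]
    [MeasurableSingletonClass Y]
    (π : X → Y) (hπ : Measurable π)
    (m : Measure X) [IsProbabilityMeasure m] (c : X → Measure X)
    (hcprob : ∀ x, IsProbabilityMeasure (c x))
    (hdis : ∀ A : Set X, MeasurableSet A → m A = ∫⁻ x, c x A ∂m)
    (hfib : ∀ᵐ x ∂m, c x (π ⁻¹' {π x}) = 1)
    (A : Set X) (hA : MeasurableSet A) (T : Set Y) (hT : MeasurableSet T) :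
    m (π ⁻¹' T ∩ A) = ∫⁻ x in π ⁻¹' T, c x A ∂m := by
  rw [hdis _ ((hπ hT).inter hA), ← lintegral_indicator (hπ hT)]
  refine lintegral_congr_ae ?_
  filter_upwards [hfib] with x hx
  haveI := hcprob x
  by_cases hxT : π x ∈ T
  · have hsub : π ⁻¹' {π x} ⊆ π ⁻¹' T := fun y hy => by
      simp only [Set.mem_preimage, Set.mem_singleton_iff] at hy ⊢
      rw [hy]; exact hxT
    have hone : c x (π ⁻¹' T) = 1 :=
      le_antisymm prob_le_one (hx ▸ measure_mono hsub)
    have hcompl : c x ((π ⁻¹' T)ᶜ) = 0 := by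
      rw [measure_compl (hπ hT) (measure_ne_top _ _), hone, measure_univ, tsub_self]
    have h1 : c x (π ⁻¹' T ∩ A) = c x A := by
      refine le_antisymm (measure_mono inter_subset_right) ?_
      calc c x A ≤ c x (A ∩ (π ⁻¹' T ∩ A)) + c x (A \ (π ⁻¹' T ∩ A)) :=
            measure_le_inter_add_diff _ _ _
        _ ≤ c x (π ⁻¹' T ∩ A) + c x ((π ⁻¹' T)ᶜ) := by
            refine add_le_add (measure_mono inter_subset_right) (measure_mono ?_)
            rintro y ⟨hyA, hy⟩ hyT
            exact hy ⟨hyT, hyA⟩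
        _ = c x (π ⁻¹' T ∩ A) := by rw [hcompl, add_zero]
    rw [Set.indicator_of_mem (show x ∈ π ⁻¹' T from hxT), h1]
  · have hcompl : c x ((π ⁻¹' {π x})ᶜ) = 0 := by
      rw [measure_compl (hπ (measurableSet_singleton _)) (measure_ne_top _ _), hx, measure_univ,
        tsub_self]
    have hzero : c x (π ⁻¹' T) = 0 := by
      refine le_antisymm (le_trans (measure_mono ?_) hcompl.le) (zero_le)
      intro y hy hy'
      simp only [Set.mem_preimage, Set.mem_singleton_iff] at hy hy'
      exact hxT (hy' ▸ hy)
    rw [Set.indicator_of_notMem (show x ∉ π ⁻¹' T from hxT)]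
    exact le_antisymm (le_trans (measure_mono inter_subset_left) hzero.le) (zero_le)

lemma aux_le' {X Y : Type*} [mX : MeasurableSpace X] [MeasurableSpace Y]
    [MeasurableSingletonClass Y]
    (π : X → Y) (hπ : Measurable π)
    (m₁ m₂ : Measure X) [IsProbabilityMeasure m₁] [IsProbabilityMeasure m₂]
    (C : ℝ≥0∞)
    (h12 : ∀ A : Set X, MeasurableSet A → m₁ A ≤ C * m₂ A)
    (h21 : ∀ A : Set X, MeasurableSet A → m₂ A ≤ C * m₁ A)
    (c₁ c₂ : X → Measure X)
    (hc₁prob : ∀ x, IsProbabilityMeasure (c₁ x))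
    (hc₂prob : ∀ x, IsProbabilityMeasure (c₂ x))
    (hc₁meas : ∀ A : Set X, MeasurableSet A →
      Measurable[MeasurableSpace.comap π inferInstance] (fun x => c₁ x A))
    (hc₂meas : ∀ A : Set X, MeasurableSet A →
      Measurable[MeasurableSpace.comap π inferInstance] (fun x => c₂ x A))
    (hc₁dis : ∀ A : Set X, MeasurableSet A → m₁ A = ∫⁻ x, c₁ x A ∂m₁)
    (hc₂dis : ∀ A : Set X, MeasurableSet A → m₂ A = ∫⁻ x, c₂ x A ∂m₂)
    (hc₁fib : ∀ᵐ x ∂m₁, c₁ x (π ⁻¹' {π x}) = 1)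
    (hc₂fib : ∀ᵐ x ∂m₂, c₂ x (π ⁻¹' {π x}) = 1)
    (A : Set X) (hA : MeasurableSet A) :
    ∀ᵐ x ∂m₁, c₁ x A ≤ C ^ 2 * c₂ x A := by
  have h𝔪 : MeasurableSpace.comap π inferInstance ≤ mX := hπ.comap_le
  have hf : Measurable[MeasurableSpace.comap π inferInstance] (fun x => c₁ x A) := hc₁meas A hA
  have hg : Measurable[MeasurableSpace.comap π inferInstance] (fun x => c₂ x A) := hc₂meas A hA
  have hg' : Measurable[MeasurableSpace.comap π inferInstance] (fun x => C ^ 2 * c₂ x A) :=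
    hg.const_mul _
  have h21' : m₂ ≤ C • m₁ := Measure.le_iff.2 fun s hs => by
    simpa [Measure.smul_apply, smul_eq_mul] using h21 s hs
  have step : ∀ S : Set X, MeasurableSet[MeasurableSpace.comap π inferInstance] S →
      ∫⁻ x in S, c₁ x A ∂(m₁.trim h𝔪) ≤ ∫⁻ x in S, C ^ 2 * c₂ x A ∂(m₁.trim h𝔪) := by
    intro S hS
    have hS' := hS
    obtain ⟨T, hT, rfl⟩ := hS'
    have e1 : ∫⁻ x in π ⁻¹' T, c₁ x A ∂(m₁.trim h𝔪) = ∫⁻ x in π ⁻¹' T, c₁ x A ∂m₁ := by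
      rw [restrict_trim h𝔪 m₁ hS, lintegral_trim h𝔪 hf]
    have e2 : ∫⁻ x in π ⁻¹' T, C ^ 2 * c₂ x A ∂(m₁.trim h𝔪)
        = ∫⁻ x in π ⁻¹' T, C ^ 2 * c₂ x A ∂m₁ := by
      rw [restrict_trim h𝔪 m₁ hS, lintegral_trim h𝔪 hg']
    rw [e1, e2]
    have key : ∫⁻ x in π ⁻¹' T, c₂ x A ∂m₂ ≤ C * ∫⁻ x in π ⁻¹' T, c₂ x A ∂m₁ := by
      calc ∫⁻ x in π ⁻¹' T, c₂ x A ∂m₂ ≤ ∫⁻ x in π ⁻¹' T, c₂ x A ∂(C • m₁) :=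
            lintegral_mono' (Measure.restrict_mono (subset_refl _) h21') le_rfl
        _ = C * ∫⁻ x in π ⁻¹' T, c₂ x A ∂m₁ := by
            rw [Measure.restrict_smul, lintegral_smul_measure, smul_eq_mul]
    calc ∫⁻ x in π ⁻¹' T, c₁ x A ∂m₁
        = m₁ (π ⁻¹' T ∩ A) :=
          (fiber_int' π hπ m₁ c₁ hc₁prob hc₁dis hc₁fib A hA T hT).symm
      _ ≤ C * m₂ (π ⁻¹' T ∩ A) := h12 _ ((hπ hT).inter hA)
      _ = C * ∫⁻ x in π ⁻¹' T, c₂ x A ∂m₂ := by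
          rw [fiber_int' π hπ m₂ c₂ hc₂prob hc₂dis hc₂fib A hA T hT]
      _ ≤ C * (C * ∫⁻ x in π ⁻¹' T, c₂ x A ∂m₁) := by gcongr
      _ = ∫⁻ x in π ⁻¹' T, C ^ 2 * c₂ x A ∂m₁ := by
          rw [lintegral_const_mul _ (hg.mono h𝔪 le_rfl), pow_two, mul_assoc]
  haveI : IsFiniteMeasure (m₁.trim h𝔪) := isFiniteMeasure_trim h𝔪
  have main : (fun x => c₁ x A) ≤ᵐ[m₁.trim h𝔪] fun x => C ^ 2 * c₂ x A :=
    @ae_le_of_forall_setLIntegral_le_of_sigmaFinite X (MeasurableSpace.comap π inferInstance)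
      (m₁.trim h𝔪) _ _ _ hf (fun s hs _ => step s hs)
  exact ae_le_of_ae_le_trim main

lemma approx_le' {X : Type*} [MeasurableSpace X] {𝒜 : Set (Set X)} (K : ℝ≥0∞) (hK : K ≠ ∞)
    (μ ν ρ : Measure X) [IsFiniteMeasure ρ] (hμρ : μ ≤ ρ) (hνρ : ν ≤ ρ)
    (hdense : ρ.MeasureDense 𝒜) (h : ∀ t ∈ 𝒜, μ t ≤ K * ν t)
    (B : Set X) (hB : MeasurableSet B) : μ B ≤ K * ν B := by
  have heps : ∀ ε : ℝ, 0 < ε → μ B ≤ K * ν B + (K + 1) * ENNReal.ofReal ε := by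
    intro ε εpos
    obtain ⟨t, ht, hlt⟩ := hdense.approx B hB (measure_ne_top _ _) ε εpos
    have hBt : μ (B \ t) ≤ ENNReal.ofReal ε := by
      refine le_trans (le_trans ?_ (Measure.le_iff'.1 hμρ _)) hlt.le
      exact measure_mono (by rw [Set.symmDiff_def]; exact subset_union_left)
    have htB : ν (t \ B) ≤ ENNReal.ofReal ε := by
      refine le_trans (le_trans ?_ (Measure.le_iff'.1 hνρ _)) hlt.le
      exact measure_mono (by rw [Set.symmDiff_def]; exact subset_union_right)
    calc μ B ≤ μ (B ∩ t) + μ (B \ t) := measure_le_inter_add_diff _ _ _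
      _ ≤ K * ν t + ENNReal.ofReal ε :=
          add_le_add ((measure_mono inter_subset_right).trans (h t ht)) hBt
      _ ≤ K * (ν B + ENNReal.ofReal ε) + ENNReal.ofReal ε := by
          gcongr
          calc ν t ≤ ν (t ∩ B) + ν (t \ B) := measure_le_inter_add_diff _ _ _
            _ ≤ ν B + ENNReal.ofReal ε :=
                add_le_add (measure_mono inter_subset_right) htB
      _ = K * ν B + (K + 1) * ENNReal.ofReal ε := by ring
  have h1 : Tendsto (fun n : ℕ => (1 : ℝ) / (n + 1)) atTop (nhds 0) :=
    tendsto_one_div_add_atTop_nhds_zero_nat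
  have h3 : Tendsto (fun n : ℕ => ENNReal.ofReal ((1 : ℝ) / (n + 1))) atTop (nhds 0) := by
    simpa using ENNReal.tendsto_ofReal h1
  have h4 := ENNReal.Tendsto.const_mul (a := K + 1) h3
    (Or.inr (ENNReal.add_ne_top.2 ⟨hK, ENNReal.one_ne_top⟩))
  have h5 : Tendsto (fun n : ℕ => K * ν B + (K + 1) * ENNReal.ofReal (1 / (n + 1)))
      atTop (nhds (K * ν B + (K + 1) * 0)) := tendsto_const_nhds.add h4
  rw [mul_zero, add_zero] at h5
  exact ge_of_tendsto h5 (Eventually.of_forall fun n => heps _ (by positivity))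

/-- If `m₂` is strongly equivalent to `m₁` (with constant `C`), then for `m₁`-a.e. `x` the
Rohlin conditional measures along the fiber partition of a measurable map `π : X → Y` into
a Besicovitch space are strongly equivalent (with constant `C²`). -/
theorem stmt7 {X Y : Type*} [MeasurableSpace X] [StandardBorelSpace X]
    [MetricSpace Y] [CompleteSpace Y] [SecondCountableTopology Y]
    [MeasurableSpace Y] [BorelSpace Y] [HasBesicovitchCovering Y]
    (π : X → Y) (hπ : Measurable π)
    (m₁ m₂ : Measure X) [IsProbabilityMeasure m₁] [IsProbabilityMeasure m₂]
    (C : ℝ≥0∞) (hC : 0 < C) (hC' : C ≠ ∞)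
    (heq : ∀ A : Set X, MeasurableSet A → m₁ A ≤ C * m₂ A ∧ m₂ A ≤ C * m₁ A)
    (c₁ c₂ : X → Measure X)
    (hc₁prob : ∀ x, IsProbabilityMeasure (c₁ x))
    (hc₂prob : ∀ x, IsProbabilityMeasure (c₂ x))
    (hc₁meas : ∀ A : Set X, MeasurableSet A →
      Measurable[MeasurableSpace.comap π inferInstance] (fun x => c₁ x A))
    (hc₂meas : ∀ A : Set X, MeasurableSet A →
      Measurable[MeasurableSpace.comap π inferInstance] (fun x => c₂ x A))
    (hc₁dis : ∀ A : Set X, MeasurableSet A → m₁ A = ∫⁻ x, c₁ x A ∂m₁)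
    (hc₂dis : ∀ A : Set X, MeasurableSet A → m₂ A = ∫⁻ x, c₂ x A ∂m₂)
    (hc₁fib : ∀ᵐ x ∂m₁, c₁ x (π ⁻¹' {π x}) = 1)
    (hc₂fib : ∀ᵐ x ∂m₂, c₂ x (π ⁻¹' {π x}) = 1) :
    ∀ᵐ x ∂m₁, ∀ A : Set X, MeasurableSet A →
      c₁ x A ≤ C ^ 2 * c₂ x A ∧ c₂ x A ≤ C ^ 2 * c₁ x A := by
  have h12 := fun A hA => (heq A hA).1
  have h21 := fun A hA => (heq A hA).2
  have hac : m₁ ≪ m₂ := by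
    intro s hs
    have h := h12 (toMeasurable m₂ s) (measurableSet_toMeasurable m₂ s)
    rw [measure_toMeasurable, hs, mul_zero] at h
    exact le_antisymm (le_trans (measure_mono (subset_toMeasurable m₂ s)) h) (zero_le)
  letI := upgradeStandardBorel X
  set 𝒜 := MeasureTheory.generateSetAlgebra (TopologicalSpace.countableBasis X) with h𝒜
  have h𝒜count : 𝒜.Countable :=
    MeasureTheory.countable_generateSetAlgebra (TopologicalSpace.countable_countableBasis X)
  have halg : IsSetAlgebra 𝒜 := MeasureTheory.isSetAlgebra_generateSetAlgebra
  have hgen : ‹MeasurableSpace X› = MeasurableSpace.generateFrom 𝒜 := by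
    rw [h𝒜, MeasureTheory.generateFrom_generateSetAlgebra_eq]
    exact BorelSpace.measurable_eq.trans
      (TopologicalSpace.isBasis_countableBasis X).borel_eq_generateFrom
  have hmeas𝒜 : ∀ t ∈ 𝒜, MeasurableSet t := fun t ht =>
    hgen ▸ MeasurableSpace.measurableSet_generateFrom ht
  have hae1 : ∀ᵐ x ∂m₁, ∀ t ∈ 𝒜, c₁ x t ≤ C ^ 2 * c₂ x t :=
    (ae_ball_iff h𝒜count).2 fun t ht =>
      aux_le' π hπ m₁ m₂ C h12 h21 c₁ c₂ hc₁prob hc₂prob hc₁meas hc₂meas hc₁dis hc₂dis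
        hc₁fib hc₂fib t (hmeas𝒜 t ht)
  have hae2' : ∀ᵐ x ∂m₂, ∀ t ∈ 𝒜, c₂ x t ≤ C ^ 2 * c₁ x t :=
    (ae_ball_iff h𝒜count).2 fun t ht =>
      aux_le' π hπ m₂ m₁ C h21 h12 c₂ c₁ hc₂prob hc₁prob hc₂meas hc₁meas hc₂dis hc₁dis
        hc₂fib hc₁fib t (hmeas𝒜 t ht)
  have hae2 : ∀ᵐ x ∂m₁, ∀ t ∈ 𝒜, c₂ x t ≤ C ^ 2 * c₁ x t := hac.ae_le hae2'
  filter_upwards [hae1, hae2] with x hx1 hx2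
  intro B hB
  haveI := hc₁prob x
  haveI := hc₂prob x
  have hdense : (c₁ x + c₂ x).MeasureDense 𝒜 :=
    Measure.MeasureDense.of_generateFrom_isSetAlgebra_finite (c₁ x + c₂ x) halg hgen
  refine ⟨approx_le' (C ^ 2) (ENNReal.pow_ne_top hC') (c₁ x) (c₂ x) (c₁ x + c₂ x)
      (Measure.le_add_right le_rfl) (Measure.le_add_left le_rfl) hdense hx1 B hB,
    approx_le' (C ^ 2) (ENNReal.pow_ne_top hC') (c₂ x) (c₁ x) (c₁ x + c₂ x)
      (Measure.le_add_left le_rfl) (Measure.le_add_right le_rfl) hdense hx2 B hB⟩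
end
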